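/- arXiv:2406.01398 — 2 statements merged into one kernel-verified Lean document; each statement's English description precedes it below -/
import Mathlib

section
/- Local non-bossiness does not imply local group non-bossiness: there exists a locally non-bossy mechanism for which a coalition of two students assigned to the same school can jointly misreport, each keeping her assignment, while changing the set of students assigned to that school. -/
/-- A preference profile: each student has a (strict) preference relation over
`Option S`, where `none` is the outside option `s₀` and `some s` is school `s`. -/
abbrev Profile (N S : Type*) := N → Option S → Option S → Prop

/-- A school choice context: strict priorities and capacities for each school. -/
structure SchoolContext (N S : Type*) where
  prio : S → N → N → Prop
  prio_sto : ∀ s, IsStrictTotalOrder N (prio s)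
  cap : S → ℕ
  cap_pos : ∀ s, 1 ≤ cap s

/-- Well-formedness of a profile: each student's preference is a strict linear order. -/
def ProfWF {N S : Type*} (P : Profile N S) : Prop :=
  ∀ i, IsStrictTotalOrder (Option S) (P i)

/-- Feasibility of an assignment: capacities are respected. -/
def Feasible {N S : Type*} (C : SchoolContext N S) (μ : N → Option S) : Prop :=
  ∀ s : S, {i | μ i = some s}.ncard ≤ C.cap s

/-- Individual rationality: no student prefers the outside option to her assignment. -/
def IndRat {N S : Type*} (P : Profile N S) (μ : N → Option S) : Prop :=
  ∀ i, ¬ P i none (μ i)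

/-- Non-wastefulness: no student prefers a school with an unfilled seat. -/
def NonWasteful {N S : Type*} (C : SchoolContext N S) (P : Profile N S)
    (μ : N → Option S) : Prop :=
  ∀ i (s : S), P i (some s) (μ i) → C.cap s ≤ {j | μ j = some s}.ncard

/-- No justified envy. -/
def NoJustifiedEnvy {N S : Type*} (C : SchoolContext N S) (P : Profile N S)
    (μ : N → Option S) : Prop :=
  ∀ i j (s : S), P i (some s) (μ i) → μ j = some s → ¬ C.prio s i j

/-- Stability of a matching. -/
def IsStable {N S : Type*} (C : SchoolContext N S) (P : Profile N S)
    (μ : N → Option S) : Prop :=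
  Feasible C μ ∧ IndRat P μ ∧ NonWasteful C P μ ∧ NoJustifiedEnvy C P μ

/-- Strategy-proofness of a mechanism. -/
def StrategyProof {N S : Type*} [DecidableEq N] (Φ : Profile N S → (N → Option S)) : Prop :=
  ∀ (P : Profile N S), ProfWF P → ∀ (i : N) (P'i : Option S → Option S → Prop),
    ProfWF (Function.update P i P'i) →
    ¬ P i (Φ (Function.update P i P'i) i) (Φ P i)

/-- Local non-bossiness: a unilateral deviation that keeps the deviator's
assignment keeps the whole set of students assigned there. -/
def LocallyNonBossy {N S : Type*} [DecidableEq N] (Φ : Profile N S → (N → Option S)) : Prop :=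
  ∀ (P : Profile N S), ProfWF P → ∀ (i : N) (P'i : Option S → Option S → Prop),
    ProfWF (Function.update P i P'i) → ∀ s : Option S,
    Φ P i = s → Φ (Function.update P i P'i) i = s →
    {j | Φ P j = s} = {j | Φ (Function.update P i P'i) j = s}

/-- Replace the preferences of the members of coalition `Cs` by `P'`. -/
def updateGroup {N S : Type*} (P : Profile N S) (Cs : Set N) (P' : Profile N S) :
    Profile N S :=
  fun i a b => (i ∈ Cs ∧ P' i a b) ∨ (i ∉ Cs ∧ P i a b)

/-- Local group strategy-proofness: no coalition of schoolmates can jointly misreport so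
that all are weakly better off and one strictly better off. -/
def LocallyGSP {N S : Type*} (Φ : Profile N S → (N → Option S)) : Prop :=
  ¬ ∃ (s : Option S) (P : Profile N S) (Cs : Set N) (P' : Profile N S),
      ProfWF P ∧ ProfWF (updateGroup P Cs P') ∧
      (∀ i ∈ Cs, Φ P i = s) ∧
      (∀ j ∈ Cs, ¬ P j (Φ P j) (Φ (updateGroup P Cs P') j)) ∧
      (∃ i ∈ Cs, P i (Φ (updateGroup P Cs P') i) (Φ P i))

/-- Local group non-bossiness: if a coalition of schoolmates jointly misreports with each
member keeping her assignment, the set of students at their common school is unchanged. -/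
def LocallyGroupNonBossy {N S : Type*} (Φ : Profile N S → (N → Option S)) : Prop :=
  ∀ (s : Option S) (P : Profile N S) (Cs : Set N) (P' : Profile N S),
    ProfWF P → ProfWF (updateGroup P Cs P') →
    (∀ i ∈ Cs, Φ P i = s) →
    (∀ i ∈ Cs, Φ (updateGroup P Cs P') i = Φ P i) →
    {j | Φ P j = s} = {j | Φ (updateGroup P Cs P') j = s}

/-- Weak non-bossiness (Bando–Imamura): a unilateral deviation keeping the deviator's
assignment keeps the set of unassigned students. -/
def WeakNonBossy {N S : Type*} [DecidableEq N] (Φ : Profile N S → (N → Option S)) : Prop :=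
  ∀ (P : Profile N S), ProfWF P → ∀ (i : N) (P'i : Option S → Option S → Prop),
    ProfWF (Function.update P i P'i) →
    Φ (Function.update P i P'i) i = Φ P i →
    {j | Φ P j = none} = {j | Φ (Function.update P i P'i) j = none}


/-- `s` is the top choice of student `i` under `P`. -/
def TopC (P : Profile (Fin 3) (Fin 2)) (i : Fin 3) (s : Fin 2) : Prop :=
  ∀ x, x ≠ some s → P i (some s) x

open Classical in
/-- The counterexample mechanism. -/
noncomputable def Omeg (P : Profile (Fin 3) (Fin 2)) : Fin 3 → Option (Fin 2) :=
  if TopC P 0 0 ∧ TopC P 1 0 then ![some 0, some 0, some 1]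
  else if TopC P 0 1 ∧ TopC P 1 1 then ![some 0, some 0, some 0]
  else fun _ => none

lemma not_top_both {P : Profile (Fin 3) (Fin 2)} (hP : ProfWF P) (i : Fin 3) :
    ¬ (TopC P i 0 ∧ TopC P i 1) := by
  rintro ⟨h0, h1⟩
  have a := h0 (some 1) (by simp)
  have b := h1 (some 0) (by simp)
  have := (hP i).trans _ _ _ a b
  exact (hP i).irrefl _ this

lemma ncard_le_three (A : Set (Fin 3)) : A.ncard ≤ 3 := by
  have := Set.ncard_le_ncard (Set.subset_univ A) Set.finite_univ
  simpa [Set.ncard_univ] using this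

lemma topC_update {P : Profile (Fin 3) (Fin 2)} {i j : Fin 3}
    {P'i : Option (Fin 2) → Option (Fin 2) → Prop} (h : j ≠ i) (s : Fin 2) :
    TopC (Function.update P i P'i) j s ↔ TopC P j s := by
  unfold TopC
  rw [Function.update_of_ne h]

lemma rkWF (f : Option (Fin 2) → ℕ) (hf : Function.Injective f) :
    IsStrictTotalOrder (Option (Fin 2)) (fun a b => f a < f b) where
  trichotomous a b := by
    rcases lt_trichotomy (f a) (f b) with h | h | h
    · exact fun h1 _ => absurd h h1
    · exact fun _ _ => hf h
    · exact fun _ h2 => absurd h h2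
  irrefl a := lt_irrefl _
  trans a b c := lt_trans

/-- Local non-bossiness does not imply local group non-bossiness: in the three-student,
two-school context with capacities (3,1), there is a locally non-bossy mechanism that
is not locally group non-bossy. -/
theorem stmt15 (C : SchoolContext (Fin 3) (Fin 2))
    (hcap0 : C.cap 0 = 3) (hcap1 : C.cap 1 = 1) :
    ∃ Ω : Profile (Fin 3) (Fin 2) → (Fin 3 → Option (Fin 2)),
      (∀ P, ProfWF P → Feasible C (Ω P)) ∧
        LocallyNonBossy Ω ∧ ¬ LocallyGroupNonBossy Ω := by
  have fin2cases : ∀ t : Fin 2, t = 0 ∨ t = 1 := by decide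
  refine ⟨Omeg, ?_, ?_, ?_⟩
  · -- feasibility
    intro P hP s
    unfold Omeg
    split_ifs with hA hB
    · obtain hs | hs := fin2cases s <;> subst hs
      · calc ({i | ![some 0, some 0, some 1] i = some (0:Fin 2)}).ncard ≤ 3 :=
              ncard_le_three _
          _ ≤ C.cap 0 := by rw [hcap0]
      · have hset : {i : Fin 3 | ![some 0, some 0, some 1] i = some (1:Fin 2)} = {2} := by
          ext i; fin_cases i <;> simp
        rw [hset, Set.ncard_singleton, hcap1]
    · obtain hs | hs := fin2cases s <;> subst hs
      · calc ({i | ![some 0, some 0, some 0] i = some (0:Fin 2)}).ncard ≤ 3 :=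
              ncard_le_three _
          _ ≤ C.cap 0 := by rw [hcap0]
      · have hset : {i : Fin 3 | ![some 0, some 0, some 0] i = some (1:Fin 2)} = ∅ := by
          ext i; fin_cases i <;> simp
        rw [hset, Set.ncard_empty]
        exact Nat.zero_le _
    · have hset : {i : Fin 3 | (none : Option (Fin 2)) = some s} = ∅ := by
        ext i; simp
      simpa [hset] using Nat.zero_le (C.cap s)
  · -- locally non-bossy
    intro P hP i P'i hP' s h1 h2
    by_cases hA : TopC P 0 0 ∧ TopC P 1 0 <;>
      by_cases hB : TopC P 0 1 ∧ TopC P 1 1 <;>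
      by_cases hA' : TopC (Function.update P i P'i) 0 0 ∧
          TopC (Function.update P i P'i) 1 0 <;>
      by_cases hB' : TopC (Function.update P i P'i) 0 1 ∧
          TopC (Function.update P i P'i) 1 1
    -- kill the impossible branches where a student top-ranks both schools
    all_goals
      first
      | (obtain ⟨a1, a2⟩ := hA; obtain ⟨b1, b2⟩ := hB
         exact absurd ⟨a1, b1⟩ (not_top_both hP 0))
      | (obtain ⟨a1, a2⟩ := hA'; obtain ⟨b1, b2⟩ := hB'
         exact absurd ⟨a1, b1⟩ (not_top_both hP' 0))
      | skip
    -- unfold the mechanism consistently with the case hypotheses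
    all_goals unfold Omeg at h1 h2 ⊢
    all_goals
      first
      | rw [if_pos hA] at h1 ⊢
      | (rw [if_neg hA] at h1 ⊢
         first
         | rw [if_pos hB] at h1 ⊢
         | rw [if_neg hB] at h1 ⊢)
    all_goals
      first
      | rw [if_pos hA'] at h2 ⊢
      | (rw [if_neg hA'] at h2 ⊢
         first
         | rw [if_pos hB'] at h2 ⊢
         | rw [if_neg hB'] at h2 ⊢)
    -- same-branch cases close by rfl
    all_goals (first | rfl | skip)
    all_goals (exfalso; fin_cases i)
    -- mismatched-assignment cases close by substitution
    all_goals (first | (subst s; simp_all) | skip)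
    -- remaining: branch A vs branch B, deviator is student 0 or 1
    · exact not_top_both hP 1 ⟨hA.2, (topC_update (by decide) 1).mp hB'.2⟩
    · exact not_top_both hP 0 ⟨hA.1, (topC_update (by decide) 1).mp hB'.1⟩
    · exact not_top_both hP 1 ⟨(topC_update (by decide) 0).mp hA'.2, hB.2⟩
    · exact not_top_both hP 0 ⟨(topC_update (by decide) 0).mp hA'.1, hB.1⟩
  · -- not locally group non-bossy
    intro h
    set P : Profile (Fin 3) (Fin 2) :=
      fun _ a b => (Option.elim a 2 Fin.val) < (Option.elim b 2 Fin.val) with hPdef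
    set P' : Profile (Fin 3) (Fin 2) :=
      fun _ a b => (Option.elim a 2 (fun s => 1 - s.val)) <
        (Option.elim b 2 (fun s => 1 - s.val)) with hP'def
    have hinj1 : Function.Injective (fun x : Option (Fin 2) => Option.elim x 2 Fin.val) := by
      intro a b hab
      match a, b with
      | none, none => rfl
      | none, some b => fin_cases b <;> simp_all
      | some a, none => fin_cases a <;> simp_all
      | some a, some b => fin_cases a <;> fin_cases b <;> simp_all <;> rfl
    have hinj2 : Function.Injective
        (fun x : Option (Fin 2) => Option.elim x 2 (fun s : Fin 2 => 1 - s.val)) := by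
      intro a b hab
      match a, b with
      | none, none => rfl
      | none, some b => fin_cases b <;> simp_all
      | some a, none => fin_cases a <;> simp_all
      | some a, some b => fin_cases a <;> fin_cases b <;> simp_all <;> rfl
    have hPwf : ProfWF P := fun i => rkWF _ hinj1
    have hUeq : ∀ i, updateGroup P {0, 1} P' i =
        if i ∈ ({0, 1} : Set (Fin 3)) then P' i else P i := by
      intro i
      funext a b
      unfold updateGroup
      by_cases hi : i ∈ ({0, 1} : Set (Fin 3)) <;> simp [hi]
    have hUwf : ProfWF (updateGroup P {0, 1} P') := by
      intro i
      rw [hUeq]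
      by_cases hi : i ∈ ({0, 1} : Set (Fin 3))
      · rw [if_pos hi]; exact rkWF _ hinj2
      · rw [if_neg hi]; exact rkWF _ hinj1
    have hTopP : ∀ i : Fin 3, TopC P i 0 := by
      intro i x hx
      match x with
      | none => simp [hPdef]
      | some b =>
        fin_cases b
        · simp at hx
        · simp [hPdef]
    have hTopU : ∀ i ∈ ({0,1} : Set (Fin 3)), TopC (updateGroup P {0,1} P') i 1 := by
      intro i hi x hx
      rw [hUeq, if_pos hi]
      match x with
      | none => simp [hP'def]
      | some b =>
        fin_cases b
        · simp [hP'def]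
        · simp at hx
    have hnotTopU : ¬ (TopC (updateGroup P {0,1} P') 0 0 ∧
        TopC (updateGroup P {0,1} P') 1 0) :=
      fun hc => not_top_both hUwf 0 ⟨hc.1, hTopU 0 (by simp)⟩
    have hOP : Omeg P = ![some 0, some 0, some 1] := by
      unfold Omeg
      rw [if_pos ⟨hTopP 0, hTopP 1⟩]
    have hOU : Omeg (updateGroup P {0,1} P') = ![some 0, some 0, some 0] := by
      unfold Omeg
      rw [if_neg hnotTopU, if_pos ⟨hTopU 0 (by simp), hTopU 1 (by simp)⟩]
    have key := h (some 0) P {0, 1} P' hPwf hUwf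
      (by intro i hi; rw [hOP]; rcases hi with rfl | rfl <;> rfl)
      (by intro i hi; rw [hOP, hOU]; rcases hi with rfl | rfl <;> rfl)
    rw [hOP, hOU] at key
    have h2 : (2 : Fin 3) ∈ {j | ![some 0, some 0, some (0:Fin 2)] j = some 0} := by
      simp
    rw [← key] at h2
    simp at h2
end

section
/- The school-median stable mechanism is locally bossy: in a four-student, two-school example, a student can change her report, remain at the same school, and change her schoolmates under the school-median stable matching. -/
-- auxiliary

def rk : Fin 4 → Option (Fin 2) → ℕ := fun i o =>
  match o with
  | none => 2
  | some s => if i = 0 ∨ i = 1 then (if s = 1 then 0 else 1) else (if s = 0 then 0 else 1)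

def rk' : Fin 4 → Option (Fin 2) → ℕ := fun i o =>
  match o with
  | none => 2
  | some s => if i = 1 then (if s = 1 then 0 else 1) else (if s = 0 then 0 else 1)

def Pr : Profile (Fin 4) (Fin 2) := fun i a b => rk i a < rk i b
def Pr' : Profile (Fin 4) (Fin 2) := fun i a b => rk' i a < rk' i b
def P0' : Option (Fin 2) → Option (Fin 2) → Prop := fun a b => rk' 0 a < rk' 0 b

lemma upd_eq : Function.update Pr 0 P0' = Pr' := by
  funext j a b
  by_cases h : j = 0
  · subst h; simp [Function.update, P0', Pr']
  · rw [Function.update_of_ne h]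
    fin_cases j
    · exact absurd rfl h
    · simp [Pr, Pr', rk, rk']
    · simp [Pr, Pr', rk, rk']
    · simp [Pr, Pr', rk, rk']

lemma sto_of_rank {α : Type*} (f : α → ℕ) (hf : Function.Injective f) :
    IsStrictTotalOrder α (fun a b => f a < f b) where
  trichotomous a b := by
    rcases lt_trichotomy (f a) (f b) with h | h | h
    · exact fun h1 _ => absurd h h1
    · exact fun _ _ => hf h
    · exact fun _ h2 => absurd h h2
  irrefl a := lt_irrefl _
  trans a b c := lt_trans

lemma wf1 : ProfWF Pr := fun i => sto_of_rank (rk i) (by fin_cases i <;> decide)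
lemma wf2 : ProfWF Pr' := fun i => sto_of_rank (rk' i) (by fin_cases i <;> decide)

def prD : Fin 2 → Fin 4 → Fin 4 → Prop := fun s i j =>
  (![(![1,0,2,3] : Fin 4 → ℕ), (![3,2,0,1] : Fin 4 → ℕ)] s) i <
  (![(![1,0,2,3] : Fin 4 → ℕ), (![3,2,0,1] : Fin 4 → ℕ)] s) j

def StableD (r : Fin 4 → Option (Fin 2) → ℕ) (μ : Fin 4 → Option (Fin 2)) : Prop :=
  (∀ s : Fin 2, (Finset.univ.filter (fun i => μ i = some s)).card ≤ 2) ∧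
  (∀ i, ¬ (r i none < r i (μ i))) ∧
  (∀ i (s : Fin 2), r i (some s) < r i (μ i) →
      2 ≤ (Finset.univ.filter (fun j => μ j = some s)).card) ∧
  (∀ i j (s : Fin 2), r i (some s) < r i (μ i) → μ j = some s → ¬ prD s i j)

instance (r μ) : Decidable (StableD r μ) := by unfold StableD prD; infer_instance

def mS : Fin 4 → Option (Fin 2) := ![some 1, some 1, some 0, some 0]
def mE : Fin 4 → Option (Fin 2) := ![some 0, some 1, some 0, some 1]
def mR : Fin 4 → Option (Fin 2) := ![some 0, some 0, some 1, some 1]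

set_option maxRecDepth 10000 in
lemma key1 : ∀ μ, StableD rk μ ↔ (μ = mS ∨ μ = mE ∨ μ = mR) := by decide

set_option maxRecDepth 10000 in
lemma key2 : ∀ μ, StableD rk' μ ↔ (μ = mR ∨ μ = mE) := by decide

lemma ncard_filter (μ : Fin 4 → Option (Fin 2)) (s : Fin 2) :
    {i | μ i = some s}.ncard = (Finset.univ.filter (fun i => μ i = some s)).card := by
  rw [Set.ncard_eq_toFinset_card', Set.toFinset_setOf]

section Bridge
variable (C : SchoolContext (Fin 4) (Fin 2))
    (hcap0 : C.cap 0 = 2) (hcap1 : C.cap 1 = 2)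
    (hp0 : ∀ i j, C.prio 0 i j ↔
      (![1, 0, 2, 3] : Fin 4 → ℕ) i < (![1, 0, 2, 3] : Fin 4 → ℕ) j)
    (hp1 : ∀ i j, C.prio 1 i j ↔
      (![3, 2, 0, 1] : Fin 4 → ℕ) i < (![3, 2, 0, 1] : Fin 4 → ℕ) j)

include hcap0 hcap1 in
lemma hcap : ∀ s : Fin 2, C.cap s = 2 := by
  intro s; fin_cases s; exacts [hcap0, hcap1]

include hp0 hp1 in
lemma hpr : ∀ (s : Fin 2) i j, C.prio s i j ↔ prD s i j := by
  intro s i j; fin_cases s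
  · simpa [prD] using hp0 i j
  · simpa [prD] using hp1 i j

include hcap0 hcap1 hp0 hp1 in
lemma bridge (r : Fin 4 → Option (Fin 2) → ℕ) (μ : Fin 4 → Option (Fin 2)) :
    IsStable C (fun i a b => r i a < r i b) μ ↔ StableD r μ := by
  have hc := hcap C hcap0 hcap1
  have hp := hpr C hp0 hp1
  constructor
  · rintro ⟨h1, h2, h3, h4⟩
    refine ⟨fun s => ?_, h2, fun i s h => ?_, fun i j s h hj => ?_⟩
    · have h' := h1 s; rw [hc s, ncard_filter] at h'; exact h'
    · have h' := h3 i s h; rw [hc s, ncard_filter] at h'; exact h'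
    · exact fun hd => h4 i j s h hj ((hp s i j).mpr hd)
  · rintro ⟨h1, h2, h3, h4⟩
    refine ⟨fun s => ?_, h2, fun i s h => ?_, fun i j s h hj hd => ?_⟩
    · rw [hc s, ncard_filter]; exact h1 s
    · rw [hc s, ncard_filter]; exact h3 i s h
    · exact h4 i j s h hj ((hp s i j).mp hd)

include hcap0 hcap1 hp0 hp1 in
lemma sset1 : {μ | IsStable C Pr μ} = {mS, mE, mR} := by
  ext μ
  rw [Set.mem_setOf_eq, show Pr = (fun i a b => rk i a < rk i b) from rfl,
    bridge C hcap0 hcap1 hp0 hp1, key1]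
  simp [Set.mem_insert_iff]

include hcap0 hcap1 hp0 hp1 in
lemma sset2 : {μ | IsStable C Pr' μ} = {mR, mE} := by
  ext μ
  rw [Set.mem_setOf_eq, show Pr' = (fun i a b => rk' i a < rk' i b) from rfl,
    bridge C hcap0 hcap1 hp0 hp1, key2]
  simp [Set.mem_insert_iff]

end Bridge

lemma ncard3 : ({mS, mE, mR} : Set (Fin 4 → Option (Fin 2))).ncard = 3 := by
  rw [show ({mS, mE, mR} : Set (Fin 4 → Option (Fin 2)))
      = ↑({mS, mE, mR} : Finset (Fin 4 → Option (Fin 2))) by simp,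
    Set.ncard_coe_finset]
  decide

lemma ncard2' : ({mR, mE} : Set (Fin 4 → Option (Fin 2))).ncard = 2 := by
  rw [show ({mR, mE} : Set (Fin 4 → Option (Fin 2)))
      = ↑({mR, mE} : Finset (Fin 4 → Option (Fin 2))) by simp,
    Set.ncard_coe_finset]
  decide


/-- The school-median stable mechanism is locally bossy. Here `SM` is the school-median
stable mechanism: for each well-formed profile it outputs a stable matching assigning
each student her `(k/2 + 1)`-th (weakly) best assignment among the `k` stable
matchings. In the four-student, two-school instance with capacities (2,2) and
priorities `s₁ : 2,1,3,4` and `s₂ : 3,4,2,1`, it is not locally non-bossy. -/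
theorem stmt19 (C : SchoolContext (Fin 4) (Fin 2))
    (hcap0 : C.cap 0 = 2) (hcap1 : C.cap 1 = 2)
    (hp0 : ∀ i j, C.prio 0 i j ↔
      (![1, 0, 2, 3] : Fin 4 → ℕ) i < (![1, 0, 2, 3] : Fin 4 → ℕ) j)
    (hp1 : ∀ i j, C.prio 1 i j ↔
      (![3, 2, 0, 1] : Fin 4 → ℕ) i < (![3, 2, 0, 1] : Fin 4 → ℕ) j)
    (SM : Profile (Fin 4) (Fin 2) → (Fin 4 → Option (Fin 2)))
    (hSM : ∀ P, ProfWF P → IsStable C P (SM P) ∧ ∀ i,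
      {μ | IsStable C P μ ∧ P i (μ i) (SM P i)}.ncard <
          {μ | IsStable C P μ}.ncard / 2 + 1 ∧
        {μ | IsStable C P μ}.ncard / 2 + 1 ≤
          {μ | IsStable C P μ ∧ ¬ P i (SM P i) (μ i)}.ncard) :
    ¬ LocallyNonBossy SM := by
  have hs1 := sset1 C hcap0 hcap1 hp0 hp1
  have hs2 := sset2 C hcap0 hcap1 hp0 hp1
  have stS : IsStable C Pr mS := by
    have : mS ∈ ({mS, mE, mR} : Set _) := Set.mem_insert _ _
    rw [← hs1] at this; exact this
  have stE : IsStable C Pr mE := by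
    have : mE ∈ ({mS, mE, mR} : Set _) := Set.mem_insert_of_mem _ (Set.mem_insert _ _)
    rw [← hs1] at this; exact this
  have stR' : IsStable C Pr' mR := by
    have : mR ∈ ({mR, mE} : Set _) := Set.mem_insert _ _
    rw [← hs2] at this; exact this
  have stE' : IsStable C Pr' mE := by
    have : mE ∈ ({mR, mE} : Set _) := Set.mem_insert_of_mem _ rfl
    rw [← hs2] at this; exact this
  -- SM Pr = mE
  obtain ⟨hst1, hmed1⟩ := hSM Pr wf1
  have hmem1 : SM Pr = mS ∨ SM Pr = mE ∨ SM Pr = mR := by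
    have : SM Pr ∈ {μ | IsStable C Pr μ} := hst1
    rw [hs1] at this; simpa [Set.mem_insert_iff] using this
  have hk1 : {μ | IsStable C Pr μ}.ncard = 3 := by rw [hs1]; exact ncard3
  have hSMPr : SM Pr = mE := by
    rcases hmem1 with h | h | h
    · -- mS : student 0's weakly-worse set = {mS}, ncard 1 but need ≥ 2
      exfalso
      have h2 := (hmed1 0).2
      rw [hk1, h] at h2
      have hset : {μ | IsStable C Pr μ ∧ ¬ Pr 0 (mS 0) (μ 0)} = {mS} := by
        ext μ
        simp only [Set.mem_setOf_eq, Set.mem_singleton_iff]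
        constructor
        · rintro ⟨hst, hw⟩
          have : μ ∈ ({mS, mE, mR} : Set _) := by rw [← hs1]; exact hst
          rcases this with rfl | rfl | rfl
          · rfl
          · exact absurd (show Pr 0 (mS 0) (mE 0) from
              (by decide : rk 0 (mS 0) < rk 0 (mE 0))) hw
          · exact absurd (show Pr 0 (mS 0) (mR 0) from
              (by decide : rk 0 (mS 0) < rk 0 (mR 0))) hw
        · rintro rfl
          exact ⟨stS, show ¬ rk 0 (mS 0) < rk 0 (mS 0) by decide⟩
      rw [hset, Set.ncard_singleton] at h2
      omega
    · exact h
    · -- mR : student 1's strictly-better set = {mS, mE}, ncard 2 but need < 2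
      exfalso
      have h2 := (hmed1 1).1
      rw [hk1, h] at h2
      have hset : {μ | IsStable C Pr μ ∧ Pr 1 (μ 1) (mR 1)} = {mS, mE} := by
        ext μ
        simp only [Set.mem_setOf_eq, Set.mem_insert_iff, Set.mem_singleton_iff]
        constructor
        · rintro ⟨hst, hw⟩
          have : μ ∈ ({mS, mE, mR} : Set _) := by rw [← hs1]; exact hst
          rcases this with rfl | rfl | rfl
          · exact Or.inl rfl
          · exact Or.inr rfl
          · exact absurd hw (show ¬ rk 1 (mR 1) < rk 1 (mR 1) by decide)
        · rintro (rfl | rfl)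
          · exact ⟨stS, show rk 1 (mS 1) < rk 1 (mR 1) by decide⟩
          · exact ⟨stE, show rk 1 (mE 1) < rk 1 (mR 1) by decide⟩
      rw [hset] at h2
      have hne : mS ≠ mE := by
        intro hh
        have := congrFun hh 0
        simp [mS, mE] at this
      rw [Set.ncard_pair hne] at h2
      omega
  -- SM Pr' = mR
  have wf2' : ProfWF (Function.update Pr 0 P0') := by rw [upd_eq]; exact wf2
  obtain ⟨hst2, hmed2⟩ := hSM Pr' wf2
  have hmem2 : SM Pr' = mR ∨ SM Pr' = mE := by
    have : SM Pr' ∈ {μ | IsStable C Pr' μ} := hst2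
    rw [hs2] at this; simpa [Set.mem_insert_iff] using this
  have hk2 : {μ | IsStable C Pr' μ}.ncard = 2 := by rw [hs2]; exact ncard2'
  have hSMPr' : SM Pr' = mR := by
    rcases hmem2 with h | h
    · exact h
    · exfalso
      have h2 := (hmed2 1).2
      rw [hk2, h] at h2
      have hset : {μ | IsStable C Pr' μ ∧ ¬ Pr' 1 (mE 1) (μ 1)} = {mE} := by
        ext μ
        simp only [Set.mem_setOf_eq, Set.mem_singleton_iff]
        constructor
        · rintro ⟨hst, hw⟩
          have : μ ∈ ({mR, mE} : Set _) := by rw [← hs2]; exact hst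
          rcases this with rfl | rfl
          · exact absurd (show Pr' 1 (mE 1) (mR 1) from
              (by decide : rk' 1 (mE 1) < rk' 1 (mR 1))) hw
          · rfl
        · rintro rfl
          exact ⟨stE', show ¬ rk' 1 (mE 1) < rk' 1 (mE 1) by decide⟩
      rw [hset, Set.ncard_singleton] at h2
      omega
  -- conclude
  intro hL
  have heq := hL Pr wf1 0 P0' wf2' (some 0)
    (by rw [hSMPr]; rfl)
    (by rw [upd_eq, hSMPr']; rfl)
  rw [upd_eq] at heq
  have h2 : (2 : Fin 4) ∈ {j | SM Pr j = some 0} := by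
    rw [Set.mem_setOf_eq, hSMPr]; rfl
  rw [heq, Set.mem_setOf_eq, hSMPr'] at h2
  have : mR 2 = some 0 := h2
  simp [mR] at this
end
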